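/- arXiv:2605.01842 — 3 statements merged into one kernel-verified Lean document; each statement's English description precedes it below -/
import Mathlib

section
/- Fix 0 < α < 1/2 and b > 0. There exist C > 0 and A₀ > 0 such that the function V(s) = α·log|s| - Im(s^α) satisfies |V(x+iy) - (α log x - α y x^{α-1})| ≤ C x^{-2} for all x > A₀ and |y| < b. -/
open Complex

noncomputable def V (α x y : ℝ) : ℝ :=
  α * Real.log ‖(x : ℂ) + y * Complex.I‖ -
    (((x : ℂ) + y * Complex.I) ^ (α : ℂ)).im

lemma aux_sin {u : ℝ} (h0 : 0 ≤ u) (h1 : u ≤ 1) : |Real.sin u - u| ≤ u ^ 3 := by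
  rcases eq_or_lt_of_le h0 with rfl | hu
  · simp
  · have h2 := Real.sin_lt hu
    have h3 := Real.sin_gt_sub_cube hu
    rw [_root_.abs_of_nonpos (by linarith)]
    nlinarith

lemma aux_sin' (u : ℝ) (h1 : |u| ≤ 1) : |Real.sin u - u| ≤ |u| ^ 3 := by
  rcases le_or_gt 0 u with h | h
  · rw [_root_.abs_of_nonneg h]
    exact aux_sin h (by rwa [_root_.abs_of_nonneg h] at h1)
  · have h2 := aux_sin (neg_nonneg.mpr h.le) (by rwa [_root_.abs_of_neg h] at h1)
    have heq : Real.sin (-u) - (-u) = -(Real.sin u - u) := by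
      rw [Real.sin_neg]; ring
    rw [_root_.abs_of_neg h]
    calc |Real.sin u - u| = |Real.sin (-u) - (-u)| := by rw [heq, abs_neg]
      _ ≤ (-u) ^ 3 := h2

lemma aux_arg {z : ℂ} (hz : 0 < z.re) : |Complex.arg z| ≤ |z.im| / z.re := by
  have hπ : |Complex.arg z| < Real.pi / 2 :=
    Complex.abs_arg_lt_pi_div_two_iff.mpr (Or.inl hz)
  have htan : Real.tan (Complex.arg z) = z.im / z.re := Complex.tan_arg z
  set θ := Complex.arg z with hθ
  rcases lt_trichotomy θ 0 with h | h | h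
  · have h1 : 0 < -θ := by linarith
    have h2 : -θ < Real.pi / 2 := by
      rw [_root_.abs_of_neg h] at hπ; exact hπ
    have h3 := Real.lt_tan h1 h2
    rw [Real.tan_neg, htan] at h3
    rw [_root_.abs_of_neg h]
    calc -θ ≤ -z.im / z.re := by rw [neg_div]; exact h3.le
      _ ≤ |z.im| / z.re := by gcongr; exact neg_le_abs _
  · rw [h, abs_zero]
    positivity
  · have h2 : θ < Real.pi / 2 := lt_of_le_of_lt (le_abs_self θ) hπ
    have h3 := Real.lt_tan h h2
    rw [htan] at h3
    rw [_root_.abs_of_pos h]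
    calc θ ≤ z.im / z.re := h3.le
      _ ≤ |z.im| / z.re := by gcongr; exact le_abs_self _

set_option maxHeartbeats 1000000 in
theorem stmt6 (α b : ℝ) (hα0 : 0 < α) (hα : α < 1/2) (hb : 0 < b) :
    ∃ C > 0, ∃ A₀ > 0, ∀ x y : ℝ, A₀ < x → |y| < b →
      |V α x y - (α * Real.log x - α * y * x ^ (α - 1))| ≤ C * x ^ (-(2:ℝ)) := by
  refine ⟨1 + b ^ 2 + 5 * b ^ 3, by positivity, 1 + b, by positivity, ?_⟩
  intro x y hx hy
  have hx0 : (0:ℝ) < x := by linarith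
  have hx1 : (1:ℝ) < x := by linarith
  have hbx : b < x := by linarith
  have hα1 : α ≤ 1 := by linarith
  have hy2 : y ^ 2 ≤ b ^ 2 := by nlinarith [_root_.sq_abs y, abs_nonneg y]
  set s : ℂ := (x:ℂ) + y * Complex.I with hs
  have hsre : s.re = x := by simp [hs]
  have hsim : s.im = y := by simp [hs]
  have hs0 : s ≠ 0 := by
    intro h
    rw [h] at hsre
    simp at hsre
    linarith
  set r : ℝ := ‖s‖ with hrdef
  have hr0 : 0 < r := norm_pos_iff.mpr hs0
  have hr2 : r ^ 2 = x ^ 2 + y ^ 2 := by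
    rw [hrdef, Complex.sq_norm, hs, Complex.normSq_add_mul_I]
  have hxr : x ≤ r := by nlinarith
  have hr2x : r ≤ 2 * x := by nlinarith
  set θ : ℝ := Complex.arg s with hθdef
  -- bound on the argument
  have hθx : |θ| ≤ b / x := by
    have h1 := aux_arg (z := s) (by rw [hsre]; exact hx0)
    rw [hsim, hsre] at h1
    exact h1.trans (by gcongr)
  have hθb : |θ| * x ≤ b := (le_div_iff₀ hx0).mp hθx
  have hθ1 : |θ| ≤ 1 := hθx.trans ((div_le_one hx0).mpr hbx.le)
  -- the imaginary part of s ^ α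
  have hIm : (s ^ (α:ℂ)).im = r ^ α * Real.sin (θ * α) := by
    rw [Complex.cpow_def_of_ne_zero hs0, Complex.exp_im, Real.rpow_def_of_pos hr0]
    congr 2
    · simp [Complex.mul_re, Complex.log_re, hrdef]
    · simp [Complex.mul_im, Complex.log_im, hθdef]
  have hV : V α x y = α * Real.log r - r ^ α * Real.sin (θ * α) := by
    rw [V, ← hs, ← hrdef, hIm]
  have hsinθ : Real.sin θ = y / r := by
    rw [hθdef, Complex.sin_arg, hsim, hrdef]
  -- sine estimates
  have hsd : |Real.sin (θ * α) - α * Real.sin θ| ≤ 2 * |θ| ^ 3 := by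
    have h1 := aux_sin' (θ * α) (by
      rw [abs_mul, _root_.abs_of_nonneg hα0.le]
      nlinarith [abs_nonneg θ])
    have h2 := aux_sin' θ hθ1
    have h3 : |θ * α| ^ 3 ≤ |θ| ^ 3 := by
      apply pow_le_pow_left₀ (abs_nonneg _)
      rw [abs_mul, _root_.abs_of_nonneg hα0.le]
      nlinarith [abs_nonneg θ]
    calc |Real.sin (θ * α) - α * Real.sin θ|
        = |(Real.sin (θ * α) - θ * α) + α * (θ - Real.sin θ)| := by ring_nf
      _ ≤ |Real.sin (θ * α) - θ * α| + |α * (θ - Real.sin θ)| := abs_add_le _ _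
      _ ≤ |θ * α| ^ 3 + α * |θ - Real.sin θ| := by
          rw [abs_mul, _root_.abs_of_nonneg hα0.le]
          exact add_le_add h1 le_rfl
      _ ≤ |θ| ^ 3 + 1 * |Real.sin θ - θ| := by
          rw [abs_sub_comm]
          exact add_le_add h3 (by gcongr)
      _ ≤ |θ| ^ 3 + |θ| ^ 3 := by rw [one_mul]; exact add_le_add le_rfl h2
      _ = 2 * |θ| ^ 3 := by ring
  have hθ3 : |θ| ^ 3 * x ^ 3 ≤ b ^ 3 := by
    calc |θ| ^ 3 * x ^ 3 = (|θ| * x) ^ 3 := by ring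
      _ ≤ b ^ 3 := pow_le_pow_left₀ (by positivity) hθb 3
  have hrα : r ^ α ≤ 2 * x := by
    calc r ^ α ≤ (2 * x) ^ α := Real.rpow_le_rpow hr0.le hr2x hα0.le
      _ ≤ (2 * x) ^ (1:ℝ) := Real.rpow_le_rpow_of_exponent_le (by linarith) hα1
      _ = 2 * x := Real.rpow_one _
  have hrα0 : (0:ℝ) ≤ r ^ α := (Real.rpow_pos_of_pos hr0 α).le
  -- A2
  have hA2 : r ^ α * |Real.sin (θ * α) - α * Real.sin θ| * x ^ 2 ≤ 4 * b ^ 3 := by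
    calc r ^ α * |Real.sin (θ * α) - α * Real.sin θ| * x ^ 2
        ≤ (2 * x) * (2 * |θ| ^ 3) * x ^ 2 := by
          apply mul_le_mul_of_nonneg_right _ (by positivity)
          exact mul_le_mul hrα hsd (abs_nonneg _) (by positivity)
      _ = 4 * (|θ| ^ 3 * x ^ 3) := by ring
      _ ≤ 4 * b ^ 3 := by linarith
  -- q = r / x
  set q : ℝ := r / x with hqdef
  have hq1 : 1 ≤ q := (one_le_div hx0).mpr hxr
  have hq0 : 0 < q := lt_of_lt_of_le one_pos hq1
  have hrxq : r = x * q := by rw [hqdef, mul_div_assoc', mul_div_cancel_left₀ _ hx0.ne']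
  have hqsq : (q ^ 2 - 1) * x ^ 2 = y ^ 2 := by
    have h1 : q ^ 2 * x ^ 2 = r ^ 2 := by rw [hrxq]; ring
    linear_combination h1 + hr2
  have hqα1 : 1 ≤ q ^ α := by
    calc (1:ℝ) = q ^ (0:ℝ) := (Real.rpow_zero q).symm
      _ ≤ q ^ α := Real.rpow_le_rpow_of_exponent_le hq1 hα0.le
  have hq' : q ^ (α - 1) = q ^ α / q := by
    rw [Real.rpow_sub hq0, Real.rpow_one]
  have hq'le1 : q ^ (α - 1) ≤ 1 := Real.rpow_le_one_of_one_le_of_nonpos hq1 (by linarith)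
  have h1q : 1 - q ^ (α - 1) ≤ q ^ 2 - 1 := by
    have e1 : (1 - q ^ (α - 1)) * q = q - q ^ α := by
      rw [hq']; field_simp
    have e2 : 1 - q ^ (α - 1) ≤ (1 - q ^ (α - 1)) * q :=
      le_mul_of_one_le_right (by linarith) hq1
    have e3 : (0:ℝ) ≤ (q - 1) * q :=
      mul_nonneg (by linarith) hq0.le
    nlinarith
  have hxα1 : x ^ (α - 1) ≤ 1 := Real.rpow_le_one_of_one_le_of_nonpos hx1.le (by linarith)
  have hxα0 : (0:ℝ) < x ^ (α - 1) := Real.rpow_pos_of_pos hx0 _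
  have hrα1 : r ^ (α - 1) = x ^ (α - 1) * q ^ (α - 1) := by
    rw [hrxq, Real.mul_rpow hx0.le hq0.le]
  have hrα1le : r ^ (α - 1) ≤ x ^ (α - 1) := by
    rw [hrα1]
    calc x ^ (α - 1) * q ^ (α - 1) ≤ x ^ (α - 1) * 1 :=
          mul_le_mul_of_nonneg_left hq'le1 hxα0.le
      _ = x ^ (α - 1) := mul_one _
  -- A3
  have hA3 : (x ^ (α - 1) - r ^ (α - 1)) * x ^ 2 ≤ b ^ 2 := by
    have e : x ^ (α - 1) - r ^ (α - 1) = x ^ (α - 1) * (1 - q ^ (α - 1)) := by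
      rw [hrα1]; ring
    rw [e]
    calc x ^ (α - 1) * (1 - q ^ (α - 1)) * x ^ 2
        ≤ 1 * (q ^ 2 - 1) * x ^ 2 := by
          apply mul_le_mul_of_nonneg_right _ (by positivity)
          exact mul_le_mul hxα1 h1q (by linarith) one_pos.le
      _ = y ^ 2 := by rw [one_mul, hqsq]
      _ ≤ b ^ 2 := hy2
  -- A1
  have hlogle : Real.log x ≤ Real.log r := Real.log_le_log hx0 hxr
  have hA1 : (Real.log r - Real.log x) * x ^ 2 ≤ b ^ 2 := by
    have h0 : Real.log r - Real.log x ≤ r / x - 1 := by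
      have h := Real.log_le_sub_one_of_pos (div_pos hr0 hx0)
      rwa [Real.log_div hr0.ne' hx0.ne'] at h
    have h1 : (r / x - 1) * x ^ 2 = (r - x) * x := by field_simp
    have h2 : (r - x) * (2 * x) ≤ y ^ 2 := by
      have ha : (r - x) * (2 * x) ≤ (r - x) * (r + x) :=
        mul_le_mul_of_nonneg_left (by linarith) (by linarith)
      have hbb : (r - x) * (r + x) = y ^ 2 := by linear_combination hr2
      linarith
    have h3 : (Real.log r - Real.log x) * x ^ 2 ≤ (r - x) * x := by
      rw [← h1]; exact mul_le_mul_of_nonneg_right h0 (by positivity)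
    linarith [h3, h2, hy2, sq_nonneg b]
  -- main identity
  have hid : V α x y - (α * Real.log x - α * y * x ^ (α - 1))
      = α * (Real.log r - Real.log x)
        - r ^ α * (Real.sin (θ * α) - α * Real.sin θ)
        - α * y * (r ^ (α - 1) - x ^ (α - 1)) := by
    rw [hV, hsinθ]
    have hr' : r ^ α * (α * (y / r)) = α * y * r ^ (α - 1) := by
      rw [Real.rpow_sub hr0, Real.rpow_one]
      field_simp
    linear_combination -hr'
  -- put everything together
  have key : |V α x y - (α * Real.log x - α * y * x ^ (α - 1))| * x ^ 2
      ≤ b ^ 2 / 2 + 4 * b ^ 3 + b ^ 3 := by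
    rw [hid]
    have tri : |α * (Real.log r - Real.log x)
        - r ^ α * (Real.sin (θ * α) - α * Real.sin θ)
        - α * y * (r ^ (α - 1) - x ^ (α - 1))|
        ≤ α * (Real.log r - Real.log x)
          + r ^ α * |Real.sin (θ * α) - α * Real.sin θ|
          + α * |y| * (x ^ (α - 1) - r ^ (α - 1)) := by
      have e1 : |α * (Real.log r - Real.log x)| = α * (Real.log r - Real.log x) :=
        _root_.abs_of_nonneg (mul_nonneg hα0.le (by linarith))
      have e2 : |r ^ α * (Real.sin (θ * α) - α * Real.sin θ)|
          = r ^ α * |Real.sin (θ * α) - α * Real.sin θ| := by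
        rw [abs_mul, _root_.abs_of_nonneg hrα0]
      have e3 : |α * y * (r ^ (α - 1) - x ^ (α - 1))|
          = α * |y| * (x ^ (α - 1) - r ^ (α - 1)) := by
        rw [abs_mul, abs_mul, _root_.abs_of_nonneg hα0.le,
          _root_.abs_of_nonpos (sub_nonpos.mpr hrα1le), neg_sub]
      calc |α * (Real.log r - Real.log x)
          - r ^ α * (Real.sin (θ * α) - α * Real.sin θ)
          - α * y * (r ^ (α - 1) - x ^ (α - 1))|
          ≤ |α * (Real.log r - Real.log x)
              - r ^ α * (Real.sin (θ * α) - α * Real.sin θ)|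
            + |α * y * (r ^ (α - 1) - x ^ (α - 1))| := abs_sub _ _
        _ ≤ |α * (Real.log r - Real.log x)|
            + |r ^ α * (Real.sin (θ * α) - α * Real.sin θ)|
            + |α * y * (r ^ (α - 1) - x ^ (α - 1))| := by
              have := abs_sub (α * (Real.log r - Real.log x))
                (r ^ α * (Real.sin (θ * α) - α * Real.sin θ))
              linarith
        _ = _ := by rw [e1, e2, e3]
    have step : (α * (Real.log r - Real.log x)
          + r ^ α * |Real.sin (θ * α) - α * Real.sin θ|
          + α * |y| * (x ^ (α - 1) - r ^ (α - 1))) * x ^ 2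
        ≤ b ^ 2 / 2 + 4 * b ^ 3 + b ^ 3 := by
      have hnn : 0 ≤ (Real.log r - Real.log x) * x ^ 2 :=
        mul_nonneg (by linarith) (by positivity)
      have s1 : α * (Real.log r - Real.log x) * x ^ 2 ≤ b ^ 2 / 2 := by
        have h4 : α * ((Real.log r - Real.log x) * x ^ 2)
            ≤ (1/2) * ((Real.log r - Real.log x) * x ^ 2) :=
          mul_le_mul_of_nonneg_right (by linarith) hnn
        linarith [hA1]
      have s3 : α * |y| * (x ^ (α - 1) - r ^ (α - 1)) * x ^ 2 ≤ b ^ 3 := by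
        have hnn3 : 0 ≤ (x ^ (α - 1) - r ^ (α - 1)) * x ^ 2 :=
          mul_nonneg (by linarith) (by positivity)
        have hαb : α * |y| ≤ b := by
          have h6 : α * |y| ≤ 1 * b :=
            mul_le_mul (by linarith) hy.le (abs_nonneg y) (by linarith)
          linarith
        calc α * |y| * (x ^ (α - 1) - r ^ (α - 1)) * x ^ 2
            = (α * |y|) * ((x ^ (α - 1) - r ^ (α - 1)) * x ^ 2) := by ring
          _ ≤ b * b ^ 2 := by
              apply mul_le_mul hαb hA3 hnn3 hb.le
          _ = b ^ 3 := by ring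
      calc (α * (Real.log r - Real.log x)
          + r ^ α * |Real.sin (θ * α) - α * Real.sin θ|
          + α * |y| * (x ^ (α - 1) - r ^ (α - 1))) * x ^ 2
          = α * (Real.log r - Real.log x) * x ^ 2
            + r ^ α * |Real.sin (θ * α) - α * Real.sin θ| * x ^ 2
            + α * |y| * (x ^ (α - 1) - r ^ (α - 1)) * x ^ 2 := by ring
        _ ≤ b ^ 2 / 2 + 4 * b ^ 3 + b ^ 3 := by linarith [s1, hA2, s3]
    calc |_| * x ^ 2 ≤ (α * (Real.log r - Real.log x)
          + r ^ α * |Real.sin (θ * α) - α * Real.sin θ|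
          + α * |y| * (x ^ (α - 1) - r ^ (α - 1))) * x ^ 2 :=
        mul_le_mul_of_nonneg_right tri (by positivity)
      _ ≤ _ := step
  -- convert to the rpow form
  have hx2 : x ^ (-(2:ℝ)) = (x ^ 2)⁻¹ := by
    rw [Real.rpow_neg hx0.le, show ((2:ℝ)) = ((2:ℕ):ℝ) by norm_num, Real.rpow_natCast]
  rw [hx2, ← div_eq_mul_inv, le_div_iff₀ (by positivity)]
  have hb2 : (0:ℝ) ≤ b ^ 2 := sq_nonneg b
  have hb3 : (0:ℝ) ≤ b ^ 3 := by positivity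
  linarith [key]
end

section
/- For ε > 0 and A sufficiently large (so that S(z) = A - Log(1-z) maps the unit disk into a right half-plane where Log Log is defined), the function h(z) = Ψ(S(z)) + iε·Log(Log(S(z))) on the unit disk is unbounded: along the radius z = r ∈ (0,1), S(r) = A - log(1-r) → +∞ as r → 1⁻, hence Im h(r) → +∞, while Ψ(S(r)) → 0 when Ψ(s) = s^{-α} e^{-i s^α} with 0 < α < 1/2. -/
open Complex

noncomputable def Psi (α : ℝ) (s : ℂ) : ℂ :=
  s ^ (-(α : ℂ)) * Complex.exp (-Complex.I * s ^ (α : ℂ))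

noncomputable def S (A : ℝ) (z : ℂ) : ℂ := (A : ℂ) - Complex.log (1 - z)

noncomputable def h (α A ε : ℝ) (z : ℂ) : ℂ :=
  Psi α (S A z) + Complex.I * ε * Complex.log (Complex.log (S A z))

lemma S_real (A : ℝ) {r : ℝ} (hr : r ∈ Set.Ioo (0:ℝ) 1) :
    S A (r : ℂ) = ((A - Real.log (1 - r) : ℝ) : ℂ) := by
  have h1 : (0:ℝ) ≤ 1 - r := by linarith [hr.2]
  have h2 : (1 : ℂ) - (r : ℂ) = ((1 - r : ℝ) : ℂ) := by push_cast; ring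
  rw [S, h2, ← Complex.ofReal_log h1]
  push_cast; ring

lemma psi_abs {α x : ℝ} (hx : 0 < x) :
    ‖Psi α ((x : ℝ) : ℂ)‖ = x ^ (-α) := by
  rw [Psi, norm_mul, Complex.norm_cpow_eq_rpow_re_of_pos hx, Complex.norm_exp,
    ← Complex.ofReal_cpow hx.le]
  simp

theorem stmt16 (α ε : ℝ) (hα0 : 0 < α) (hα : α < 1/2) (hε : 0 < ε) :
    ∃ A₀ : ℝ, ∀ A : ℝ, A₀ ≤ A →
      Filter.Tendsto (fun r : ℝ => (S A (r : ℂ)).re)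
        (nhdsWithin 1 (Set.Ioo (0:ℝ) 1)) Filter.atTop ∧
      Filter.Tendsto (fun r : ℝ => Psi α (S A (r : ℂ)))
        (nhdsWithin 1 (Set.Ioo (0:ℝ) 1)) (nhds 0) ∧
      Filter.Tendsto (fun r : ℝ => (h α A ε (r : ℂ)).im)
        (nhdsWithin 1 (Set.Ioo (0:ℝ) 1)) Filter.atTop ∧
      ¬ ∃ M : ℝ, ∀ z : ℂ, ‖z‖ < 1 → ‖h α A ε z‖ ≤ M := by
  refine ⟨0, fun A _ => ?_⟩
  set l := nhdsWithin (1:ℝ) (Set.Ioo (0:ℝ) 1) with hl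
  haveI hne : l.NeBot := by
    rw [hl, ← mem_closure_iff_nhdsWithin_neBot, closure_Ioo (by norm_num : (0:ℝ) ≠ 1)]
    constructor <;> norm_num
  have hmem : ∀ᶠ r : ℝ in l, r ∈ Set.Ioo (0:ℝ) 1 := self_mem_nhdsWithin
  -- the real function x r = A - log(1-r) tends to atTop
  have hsub : Filter.Tendsto (fun r : ℝ => 1 - r) l (nhdsWithin 0 (Set.Ioi (0:ℝ))) := by
    apply tendsto_nhdsWithin_of_tendsto_nhds_of_eventually_within
    · have : Filter.Tendsto (fun r : ℝ => 1 - r) (nhds 1) (nhds 0) := by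
        have hc : Continuous (fun r : ℝ => 1 - r) := by continuity
        simpa using hc.tendsto (1:ℝ)
      exact this.mono_left nhdsWithin_le_nhds
    · filter_upwards [hmem] with r hr
      exact Set.mem_Ioi.mpr (by linarith [hr.2])
  have hlog : Filter.Tendsto (fun r : ℝ => Real.log (1 - r)) l Filter.atBot :=
    Real.tendsto_log_nhdsGT_zero.comp hsub
  have hx : Filter.Tendsto (fun r : ℝ => A - Real.log (1 - r)) l Filter.atTop := by
    simpa [sub_eq_add_neg] using Filter.tendsto_atTop_add_const_left l A (Filter.tendsto_neg_atBot_atTop.comp hlog)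
  -- Part 1
  have part1 : Filter.Tendsto (fun r : ℝ => (S A (r : ℂ)).re) l Filter.atTop := by
    apply hx.congr'
    filter_upwards [hmem] with r hr
    rw [S_real A hr, Complex.ofReal_re]
  -- eventual positivity / largeness
  have hx2 : ∀ᶠ r : ℝ in l, (2:ℝ) ≤ A - Real.log (1 - r) := hx.eventually_ge_atTop 2
  -- Part 2
  have part2 : Filter.Tendsto (fun r : ℝ => Psi α (S A (r : ℂ))) l (nhds 0) := by
    rw [tendsto_zero_iff_norm_tendsto_zero]
    have key : Filter.Tendsto (fun r : ℝ => (A - Real.log (1 - r)) ^ (-α)) l (nhds 0) :=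
      (tendsto_rpow_neg_atTop hα0).comp hx
    apply key.congr'
    filter_upwards [hmem, hx2] with r hr h2
    have hpos : 0 < A - Real.log (1 - r) := by linarith
    rw [S_real A hr, psi_abs hpos]
  -- Part 3
  have him0 : Filter.Tendsto (fun r : ℝ => (Psi α (S A (r : ℂ))).im) l (nhds 0) := by
    have := (Complex.continuous_im.tendsto 0).comp part2
    exact this
  have hloglog : Filter.Tendsto
      (fun r : ℝ => ε * Real.log (Real.log (A - Real.log (1 - r)))) l Filter.atTop := by
    apply Filter.Tendsto.const_mul_atTop hε
    exact Real.tendsto_log_atTop.comp (Real.tendsto_log_atTop.comp hx)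
  have part3 : Filter.Tendsto (fun r : ℝ => (h α A ε (r : ℂ)).im) l Filter.atTop := by
    have := him0.add_atTop hloglog
    apply this.congr'
    filter_upwards [hmem, hx2] with r hr h2
    have hpos : (0:ℝ) < A - Real.log (1 - r) := by linarith
    have hlog1 : (0:ℝ) < Real.log (A - Real.log (1 - r)) := by
      apply Real.log_pos; linarith
    rw [h, Complex.add_im]
    congr 1
    rw [S_real A hr, ← Complex.ofReal_log hpos.le, ← Complex.ofReal_log hlog1.le]
    simp [Complex.mul_im]
  refine ⟨part1, part2, part3, ?_⟩
  rintro ⟨M, hM⟩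
  obtain ⟨r, hr, hrM⟩ := (hmem.and (part3.eventually_gt_atTop M)).exists
  have h1 : ‖(r : ℂ)‖ < 1 := by
    rw [Complex.norm_real, Real.norm_eq_abs, abs_of_pos hr.1]; exact hr.2
  have := hM _ h1
  have h2 : (h α A ε (r:ℂ)).im ≤ ‖h α A ε (r:ℂ)‖ :=
    le_trans (le_abs_self _) (Complex.abs_im_le_norm _)
  linarith
end

section
/- Fix 0 < k < 1. There exists a bounded, globally injective, sense-preserving harmonic mapping f = h + conj(g) of the open unit disk into ℂ, with h, g holomorphic on 𝔻, such that |g'(z)| ≤ k |h'(z)| for all z ∈ 𝔻, yet h is unbounded on 𝔻. -/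
open Complex Metric

noncomputable section Stmt19Aux

def Complex.abs : AbsoluteValue ℂ ℝ where
  toFun := fun z => ‖z‖
  map_mul' := norm_mul
  nonneg' := norm_nonneg
  eq_zero' := fun _ => norm_eq_zero
  add_le' := norm_add_le

@[simp] theorem Complex.norm_eq_abs (z : ℂ) : ‖z‖ = Complex.abs z := rfl

@[simp] theorem Complex.abs_I : Complex.abs Complex.I = 1 := by
  rw [← Complex.norm_eq_abs]; exact Complex.norm_I

@[simp] theorem Complex.abs_ofReal (r : ℝ) : Complex.abs (r : ℂ) = |r| := by
  rw [← Complex.norm_eq_abs]; exact Complex.norm_real r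

@[simp] theorem Complex.abs_ofNat (n : ℕ) [n.AtLeastTwo] : Complex.abs (no_index (OfNat.ofNat n : ℂ)) = OfNat.ofNat n := by
  rw [← Complex.norm_eq_abs]; exact Complex.norm_ofNat n

theorem Complex.abs_exp (z : ℂ) : Complex.abs (Complex.exp z) = Real.exp z.re := Complex.norm_exp z

theorem Complex.abs_re_le_abs (z : ℂ) : |z.re| ≤ Complex.abs z := Complex.abs_re_le_norm z

theorem Complex.re_le_abs (z : ℂ) : z.re ≤ Complex.abs z := Complex.re_le_norm z

theorem Complex.abs_exp_sub_one_le {x : ℂ} (hx : Complex.abs x ≤ 1) :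
    Complex.abs (Complex.exp x - 1) ≤ 2 * Complex.abs x := Complex.norm_exp_sub_one_le hx

theorem Complex.abs_le_abs_re_add_abs_im (z : ℂ) : Complex.abs z ≤ |z.re| + |z.im| :=
  Complex.norm_le_abs_re_add_abs_im z

theorem Complex.abs.sub_le_add (a b : ℂ) : Complex.abs (a - b) ≤ Complex.abs a + Complex.abs b :=
  norm_sub_le a b

namespace Stmt19

/-- ζ(z) = 1000 - log(1-z): maps the unit disk onto a thin half-strip-like region
with huge real part. -/
def zf (z : ℂ) : ℂ := 1000 - Complex.log (1 - z)

/-- τ(z) = log ζ + 7i/ζ : maps the disk into a thin, exponentially descending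
"snake" region. -/
def tf (z : ℂ) : ℂ := Complex.log (zf z) + 7 * Complex.I * (zf z)⁻¹

/-- derivative of τ -/
def td (z : ℂ) : ℂ := (1 - z)⁻¹ * ((zf z)⁻¹ - 7 * Complex.I * ((zf z)⁻¹ * (zf z)⁻¹))

/-- analytic part -/
def hf (k : ℝ) (z : ℂ) : ℂ := Complex.exp (Complex.I * tf z) + ((k/1000 : ℝ) : ℂ) * tf z

/-- co-analytic part -/
def gf (k : ℝ) (z : ℂ) : ℂ := -((k/1000 : ℝ) : ℂ) * tf z

variable {z z₁ z₂ : ℂ}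

lemma sub_re_pos (hz : Complex.abs z < 1) : 0 < (1 - z).re := by
  have : |z.re| ≤ Complex.abs z := Complex.abs_re_le_abs z
  have : z.re < 1 := by cases abs_le.mp this; linarith
  simp [Complex.sub_re]; linarith

lemma sub_ne (hz : Complex.abs z < 1) : (1 : ℂ) - z ≠ 0 := by
  intro h
  have := sub_re_pos hz
  rw [h] at this; simp at this

lemma sub_abs_le (hz : Complex.abs z < 1) : Complex.abs (1 - z) ≤ 2 := by
  calc Complex.abs (1 - z) ≤ Complex.abs 1 + Complex.abs z := by
        simpa [sub_eq_add_neg] using Complex.abs.add_le 1 (-z)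
    _ ≤ 2 := by simp; linarith

lemma sub_abs_pos (hz : Complex.abs z < 1) : 0 < Complex.abs (1 - z) :=
  (Complex.abs.pos_iff).mpr (sub_ne hz)

lemma zf_re (hz : Complex.abs z < 1) : 999 ≤ (zf z).re := by
  have h1 : (zf z).re = 1000 - Real.log (Complex.abs (1 - z)) := by
    simp [zf, Complex.sub_re, Complex.log_re]
  have h2 : Real.log (Complex.abs (1 - z)) ≤ Real.log 2 :=
    Real.log_le_log (sub_abs_pos hz) (sub_abs_le hz)
  have h3 : Real.log 2 < 0.6931471808 := Real.log_two_lt_d9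
  rw [h1]; linarith

lemma zf_im_le (hz : Complex.abs z < 1) : |(zf z).im| ≤ 1.6 := by
  have h1 : (zf z).im = -Complex.arg (1 - z) := by
    simp [zf, Complex.sub_im, Complex.log_im]
  have h2 : |Complex.arg (1 - z)| ≤ Real.pi / 2 :=
    Complex.abs_arg_le_pi_div_two_iff.mpr (le_of_lt (sub_re_pos hz))
  have h3 : Real.pi < 3.15 := Real.pi_lt_d2
  rw [h1, abs_neg]; linarith

lemma zf_re_pos (hz : Complex.abs z < 1) : 0 < (zf z).re := by linarith [zf_re hz]

lemma zf_abs (hz : Complex.abs z < 1) : 999 ≤ Complex.abs (zf z) :=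
  le_trans (zf_re hz) (Complex.re_le_abs _)

lemma zf_ne (hz : Complex.abs z < 1) : zf z ≠ 0 := by
  intro h
  have := zf_re hz
  rw [h] at this; simp at this; linarith

lemma zf_slit (hz : Complex.abs z < 1) : zf z ∈ Complex.slitPlane :=
  Or.inl (zf_re_pos hz)

/-- |arg w| <= (pi/2)|im w|/re w for re w > 0 -/
lemma arg_le_div {w : ℂ} (h1 : 0 < w.re) : |Complex.arg w| ≤ (Real.pi/2) * |w.im| / w.re := by
  have habs : 0 < Complex.abs w := lt_of_lt_of_le h1 (Complex.re_le_abs w)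
  have hre : w.re ≤ Complex.abs w := Complex.re_le_abs w
  have hpi2 : |Complex.arg w| ≤ Real.pi / 2 :=
    Complex.abs_arg_le_pi_div_two_iff.mpr h1.le
  have hpi : 0 < Real.pi := Real.pi_pos
  have hsin : Real.sin |Complex.arg w| = |w.im| / Complex.abs w := by
    rcases le_or_gt 0 (Complex.arg w) with h | h
    · have him : 0 ≤ w.im := Complex.arg_nonneg_iff.mp h
      rw [_root_.abs_of_nonneg h, Complex.sin_arg, _root_.abs_of_nonneg him]; rfl
    · have him : w.im < 0 := by
        by_contra hc
        exact absurd (Complex.arg_nonneg_iff.mpr (not_lt.mp hc)) (not_le.mpr h)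
      rw [_root_.abs_of_neg h, Real.sin_neg, Complex.sin_arg, _root_.abs_of_neg him, neg_div]; rfl
  have key : 2/Real.pi * |Complex.arg w| ≤ |w.im| / Complex.abs w := by
    have := Real.mul_le_sin (abs_nonneg (Complex.arg w)) hpi2
    rwa [hsin] at this
  have h2 : |Complex.arg w| ≤ (Real.pi/2) * (|w.im| / Complex.abs w) := by
    have hh := mul_le_mul_of_nonneg_left key (by positivity : (0:ℝ) ≤ Real.pi/2)
    calc |Complex.arg w| = (Real.pi/2) * (2/Real.pi * |Complex.arg w|) := by
          field_simp
      _ ≤ (Real.pi/2) * (|w.im| / Complex.abs w) := hh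
  calc |Complex.arg w| ≤ (Real.pi/2) * (|w.im| / Complex.abs w) := h2
    _ ≤ (Real.pi/2) * |w.im| / w.re := by
        rw [mul_div_assoc]
        refine mul_le_mul_of_nonneg_left ?_ (by positivity : (0:ℝ) ≤ Real.pi/2)
        exact div_le_div_of_nonneg_left (abs_nonneg _) h1 hre


lemma tf_im_eq (hz : Complex.abs z < 1) :
    (tf z).im = Complex.arg (zf z) + 7 * ((zf z).re / Complex.normSq (zf z)) := by
  simp [tf, Complex.add_im, Complex.mul_im, Complex.mul_re, Complex.inv_re, Complex.log_im]

lemma tf_re_eq (hz : Complex.abs z < 1) :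
    (tf z).re = Real.log (Complex.abs (zf z)) + 7 * ((zf z).im / Complex.normSq (zf z)) := by
  simp [tf, Complex.add_re, Complex.mul_im, Complex.mul_re, Complex.inv_im, Complex.log_re]
  ring

lemma normSq_ge (hz : Complex.abs z < 1) : ((zf z).re)^2 ≤ Complex.normSq (zf z) := by
  rw [Complex.normSq_apply]; nlinarith [sq_nonneg (zf z).im]

lemma normSq_le (hz : Complex.abs z < 1) :
    Complex.normSq (zf z) ≤ ((zf z).re)^2 + 2.56 := by
  rw [Complex.normSq_apply]
  have := zf_im_le hz
  have h2 : ((zf z).im)^2 ≤ 2.56 := by nlinarith [abs_nonneg (zf z).im, _root_.sq_abs (zf z).im]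
  nlinarith

lemma tf_im_bound (hz : Complex.abs z < 1) : |(tf z).im| ≤ 1.61 := by
  rw [tf_im_eq hz]
  have h1 : |Complex.arg (zf z)| ≤ Real.pi / 2 :=
    Complex.abs_arg_le_pi_div_two_iff.mpr (zf_re_pos hz).le
  have hre := zf_re hz
  have hns := normSq_ge hz
  have h2 : (zf z).re / Complex.normSq (zf z) ≤ 1/999 := by
    have h3 : (zf z).re / Complex.normSq (zf z) ≤ (zf z).re / ((zf z).re^2) := by
      apply div_le_div_of_nonneg_left (by linarith) (by nlinarith) hns
    have h4 : (zf z).re / ((zf z).re^2) = 1 / (zf z).re := by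
      field_simp
    rw [h4] at h3
    calc (zf z).re / Complex.normSq (zf z) ≤ 1 / (zf z).re := h3
      _ ≤ 1/999 := by
        apply div_le_div_of_nonneg_left (by norm_num) (by linarith) hre
  have h5 : 0 ≤ (zf z).re / Complex.normSq (zf z) := by
    apply div_nonneg (by linarith)
    nlinarith
  have hpi : Real.pi < 3.15 := Real.pi_lt_d2
  calc |Complex.arg (zf z) + 7 * ((zf z).re / Complex.normSq (zf z))|
      ≤ |Complex.arg (zf z)| + |7 * ((zf z).re / Complex.normSq (zf z))| := abs_add_le _ _
    _ ≤ Real.pi/2 + 7 * (1/999) := by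
        have : |7 * ((zf z).re / Complex.normSq (zf z))| = 7 * ((zf z).re / Complex.normSq (zf z)) := by
          rw [_root_.abs_of_nonneg (by positivity)]
        rw [this]
        have h6 : 7 * ((zf z).re / Complex.normSq (zf z)) ≤ 7 * (1/999) := by linarith
        linarith
    _ ≤ 1.61 := by linarith

lemma exp_bounds (hz : Complex.abs z < 1) :
    1/9 ≤ Complex.abs (Complex.exp (Complex.I * tf z)) ∧
      Complex.abs (Complex.exp (Complex.I * tf z)) ≤ 9 := by
  have h1 : Complex.abs (Complex.exp (Complex.I * tf z)) = Real.exp (-(tf z).im) := by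
    rw [Complex.abs_exp]
    congr 1
    simp [Complex.mul_re]
  have h2 := tf_im_bound hz
  rw [abs_le] at h2
  have he2 : Real.exp 2 < 9 := by
    have h3 : Real.exp 2 = Real.exp 1 * Real.exp 1 := by
      rw [← Real.exp_add]; norm_num
    have := Real.exp_one_lt_d9
    nlinarith [Real.exp_pos 1]
  constructor
  · rw [h1]
    have h4 : Real.exp (-(tf z).im) ≥ Real.exp (-2) := by
      apply Real.exp_le_exp.mpr; linarith
    have h5 : Real.exp (-2) = 1 / Real.exp 2 := by
      rw [Real.exp_neg]; ring
    rw [h5] at h4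
    have : (1:ℝ)/9 ≤ 1 / Real.exp 2 := by
      apply div_le_div_of_nonneg_left (by norm_num) (Real.exp_pos 2) he2.le
    linarith
  · rw [h1]
    have h4 : Real.exp (-(tf z).im) ≤ Real.exp 2 := by
      apply Real.exp_le_exp.mpr; linarith
    linarith

lemma hasDerivAt_zf (hz : Complex.abs z < 1) : HasDerivAt zf ((1 - z)⁻¹) z := by
  have h1 : HasDerivAt (fun w : ℂ => 1 - w) (-1) z := (hasDerivAt_id z).const_sub 1
  have hslit : (1 - z) ∈ Complex.slitPlane := Or.inl (sub_re_pos hz)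
  have h2 : HasDerivAt (fun w : ℂ => Complex.log (1 - w)) ((1-z)⁻¹ * (-1)) z :=
    (Complex.hasDerivAt_log hslit).comp z h1
  have h3 := h2.const_sub 1000
  have : HasDerivAt (fun w : ℂ => 1000 - Complex.log (1 - w)) ((1-z)⁻¹) z := by
    rw [show (1-z)⁻¹ = -((1 - z)⁻¹ * -1) by ring]; exact h3
  exact this

lemma hasDerivAt_tf (hz : Complex.abs z < 1) : HasDerivAt tf (td z) z := by
  have hz1 := hasDerivAt_zf hz
  have hlog : HasDerivAt (fun w => Complex.log (zf w)) ((zf z)⁻¹ * (1-z)⁻¹) z :=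
    (Complex.hasDerivAt_log (zf_slit hz)).comp z hz1
  have hinv : HasDerivAt (fun w => (zf w)⁻¹) (-(1-z)⁻¹ / (zf z)^2) z := hz1.inv (zf_ne hz)
  have hmul := hinv.const_mul (7*Complex.I)
  have hsum := hlog.add hmul
  have : HasDerivAt tf ((zf z)⁻¹ * (1-z)⁻¹ + 7*Complex.I * (-(1-z)⁻¹ / (zf z)^2)) z := hsum
  convert this using 1
  unfold td
  field_simp [zf_ne hz, sub_ne hz]
  ring

lemma hasDerivAt_hf (k : ℝ) (hz : Complex.abs z < 1) :
    HasDerivAt (hf k)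
      (td z * (Complex.I * Complex.exp (Complex.I * tf z) + ((k/1000 : ℝ) : ℂ))) z := by
  have h1 := (hasDerivAt_tf hz).const_mul Complex.I
  have h2 := h1.cexp
  have h3 := (hasDerivAt_tf hz).const_mul ((k/1000 : ℝ) : ℂ)
  have hsum := h2.add h3
  have : HasDerivAt (hf k)
      (Complex.exp (Complex.I * tf z) * (Complex.I * td z) + ((k/1000 : ℝ) : ℂ) * td z) z := hsum
  convert this using 1
  ring

lemma hasDerivAt_gf (k : ℝ) (hz : Complex.abs z < 1) :
    HasDerivAt (gf k) (-((k/1000 : ℝ) : ℂ) * td z) z := by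
  have h3 := (hasDerivAt_tf hz).const_mul (-((k/1000 : ℝ) : ℂ))
  exact h3

lemma deriv_hf (k : ℝ) (hz : Complex.abs z < 1) :
    deriv (hf k) z = td z * (Complex.I * Complex.exp (Complex.I * tf z) + ((k/1000 : ℝ) : ℂ)) :=
  (hasDerivAt_hf k hz).deriv

lemma deriv_gf (k : ℝ) (hz : Complex.abs z < 1) :
    deriv (gf k) z = -((k/1000 : ℝ) : ℂ) * td z :=
  (hasDerivAt_gf k hz).deriv

lemma factor_lb (k : ℝ) (hk0 : 0 < k) (hk1 : k < 1) (hz : Complex.abs z < 1) :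
    1/10 ≤ Complex.abs (Complex.I * Complex.exp (Complex.I * tf z) + ((k/1000 : ℝ) : ℂ)) := by
  have h1 := (exp_bounds hz).1
  have h2 : Complex.abs (Complex.I * Complex.exp (Complex.I * tf z)) =
      Complex.abs (Complex.exp (Complex.I * tf z)) := by
    rw [map_mul, Complex.abs_I, one_mul]
  have h3 : Complex.abs (((k/1000 : ℝ) : ℂ)) = k/1000 := by
    rw [Complex.abs_ofReal, _root_.abs_of_nonneg (by positivity)]
  have h4 := Complex.abs.add_le (Complex.I * Complex.exp (Complex.I * tf z) + ((k/1000 : ℝ) : ℂ))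
      (-((k/1000 : ℝ) : ℂ))
  simp only [add_neg_cancel_right] at h4
  have h5 : Complex.abs (-((k/1000 : ℝ) : ℂ)) = k/1000 := by
    rw [Complex.abs.map_neg, h3]
  rw [h5, h2] at h4
  linarith

lemma td_ne (hz : Complex.abs z < 1) : td z ≠ 0 := by
  unfold td
  apply mul_ne_zero (inv_ne_zero (sub_ne hz))
  intro h
  have hne := zf_ne hz
  have key : (zf z)⁻¹ - 7*Complex.I*((zf z)⁻¹*(zf z)⁻¹) = (zf z)⁻¹ * (zf z)⁻¹ * (zf z - 7*Complex.I) := by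
    field_simp
  rw [key] at h
  rcases mul_eq_zero.mp h with h' | h'
  · exact (mul_ne_zero (inv_ne_zero hne) (inv_ne_zero hne)) h'
  · have : (zf z).re = 7 * Complex.I.re := by
      have := congrArg Complex.re (sub_eq_zero.mp h')
      simpa using this
    simp [Complex.I_re] at this
    have := zf_re hz
    linarith

/-- τ is injective on the disk. -/
lemma stepD (hz1 : Complex.abs z₁ < 1) (hz2 : Complex.abs z₂ < 1)
    (heq : tf z₁ = tf z₂) : z₁ = z₂ := by
  set w₁ := zf z₁ with hw1
  set w₂ := zf z₂ with hw2
  have hne1 : w₁ ≠ 0 := zf_ne hz1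
  have hne2 : w₂ ≠ 0 := zf_ne hz2
  have ha1 : 999 ≤ Complex.abs w₁ := zf_abs hz1
  have ha2 : 999 ≤ Complex.abs w₂ := zf_abs hz2
  set L := Complex.log w₁ - Complex.log w₂ with hL
  have key : L = 7 * Complex.I * (w₂⁻¹ - w₁⁻¹) := by
    have : Complex.log w₁ + 7*Complex.I*w₁⁻¹ = Complex.log w₂ + 7*Complex.I*w₂⁻¹ := heq
    rw [hL]; linear_combination this
  -- |L| ≤ 14/999 ≤ 1
  have habsL : Complex.abs L ≤ 14/999 := by
    rw [key]
    have h1 : Complex.abs (w₂⁻¹ - w₁⁻¹) ≤ Complex.abs w₂⁻¹ + Complex.abs w₁⁻¹ :=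
      Complex.abs.sub_le_add _ _
    have h2 : Complex.abs w₂⁻¹ ≤ 1/999 := by
      rw [map_inv₀]
      rw [inv_le_comm₀ (by linarith) (by norm_num)]
      simpa using ha2
    have h3 : Complex.abs w₁⁻¹ ≤ 1/999 := by
      rw [map_inv₀]
      rw [inv_le_comm₀ (by linarith) (by norm_num)]
      simpa using ha1
    rw [map_mul, map_mul]
    simp only [Complex.abs_I, mul_one]
    have h7abs : Complex.abs (7:ℂ) = 7 := by
      norm_num
    rw [h7abs]
    linarith
  -- w₁ - w₂ = w₂ (exp L - 1)
  have hfac : w₁ - w₂ = w₂ * (Complex.exp L - 1) := by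
    have e1 : Complex.exp (Complex.log w₁) = w₁ := Complex.exp_log hne1
    have e2 : Complex.exp (Complex.log w₂) = w₂ := Complex.exp_log hne2
    have : Complex.exp (Complex.log w₂ + L) = w₂ * Complex.exp L := by
      rw [Complex.exp_add, e2]
    have e3 : Complex.log w₂ + L = Complex.log w₁ := by rw [hL]; ring
    rw [e3, e1] at this
    rw [this]; ring
  -- |L| ≤ (7/999) * |exp L - 1| ≤ (14/999)|L|
  have hL2 : Complex.abs L ≤ 7 * (Complex.abs w₂ * (2 * Complex.abs L)) / (Complex.abs w₁ * Complex.abs w₂) := by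
    have hsub : w₂⁻¹ - w₁⁻¹ = (w₁ - w₂) / (w₂ * w₁) := inv_sub_inv hne2 hne1
    have habs2 : Complex.abs (w₂⁻¹ - w₁⁻¹) =
        Complex.abs (w₁ - w₂) / (Complex.abs w₁ * Complex.abs w₂) := by
      rw [hsub, map_div₀, map_mul, mul_comm (Complex.abs w₂)]
    have hexp : Complex.abs (Complex.exp L - 1) ≤ 2 * Complex.abs L :=
      Complex.abs_exp_sub_one_le (by linarith)
    have h5 : Complex.abs (w₁ - w₂) ≤ Complex.abs w₂ * (2 * Complex.abs L) := by
      rw [hfac, map_mul]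
      have := Complex.abs.nonneg w₂
      nlinarith
    have h6 : Complex.abs L = 7 * Complex.abs (w₁ - w₂) / (Complex.abs w₁ * Complex.abs w₂) := by
      rw [key, map_mul, map_mul, habs2]
      simp only [Complex.abs_I, mul_one]
      have : Complex.abs (7:ℂ) = 7 := by norm_num [Complex.abs_ofNat]
      rw [this]; ring
    rw [h6]
    apply div_le_div_of_nonneg_right ?_ (by nlinarith) |>.trans_eq rfl
    nlinarith
  have hLzero : Complex.abs L = 0 := by
    have hq : 7 * (Complex.abs w₂ * (2 * Complex.abs L)) / (Complex.abs w₁ * Complex.abs w₂)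
        = 14 * Complex.abs L / Complex.abs w₁ := by
      field_simp
      ring
    rw [hq] at hL2
    have h7 : 14 * Complex.abs L / Complex.abs w₁ ≤ 14 * Complex.abs L / 999 := by
      apply div_le_div_of_nonneg_left ?_ (by norm_num) ha1
      positivity
    by_contra hc
    have hpos : 0 < Complex.abs L := lt_of_le_of_ne (Complex.abs.nonneg L) (Ne.symm hc)
    nlinarith
  have : L = 0 := by
    rwa [Complex.abs.eq_zero] at hLzero
  have hlog : Complex.log w₁ = Complex.log w₂ := by
    have := sub_eq_zero.mp this
    exact this
  have hw : w₁ = w₂ := by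
    rw [← Complex.exp_log hne1, ← Complex.exp_log hne2, hlog]
  -- unfold zf
  have : Complex.log (1 - z₁) = Complex.log (1 - z₂) := by
    have h9 : (1000 : ℂ) - Complex.log (1 - z₁) = 1000 - Complex.log (1 - z₂) := hw
    linear_combination -h9
  have h1z : (1:ℂ) - z₁ = 1 - z₂ := by
    rw [← Complex.exp_log (sub_ne hz1), ← Complex.exp_log (sub_ne hz2), this]
  linear_combination -h1z

set_option maxHeartbeats 2000000 in
/-- No two points of the "snake" τ(𝔻) have the same height and horizontal
distance ≥ 6 : the snake descends. -/
lemma stepC (hz1 : Complex.abs z₁ < 1) (hz2 : Complex.abs z₂ < 1)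
    (him : (tf z₁).im = (tf z₂).im)
    (hre : 6 ≤ (tf z₂).re - (tf z₁).re) : False := by
  set r₁ := (zf z₁).re with hr1
  set r₂ := (zf z₂).re with hr2
  set a₁ := Complex.abs (zf z₁) with ha1
  set a₂ := Complex.abs (zf z₂) with ha2
  set n₁ := Complex.normSq (zf z₁) with hn1
  set n₂ := Complex.normSq (zf z₂) with hn2
  have hr1b : 999 ≤ r₁ := zf_re hz1
  have hr2b : 999 ≤ r₂ := zf_re hz2
  have ha1b : 999 ≤ a₁ := zf_abs hz1
  have ha2b : 999 ≤ a₂ := zf_abs hz2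
  have him1 : |(zf z₁).im| ≤ 1.6 := zf_im_le hz1
  have him2 : |(zf z₂).im| ≤ 1.6 := zf_im_le hz2
  have hn1b : 998001 ≤ n₁ := by
    have := normSq_ge hz1; nlinarith
  have hn2b : 998001 ≤ n₂ := by
    have := normSq_ge hz2; nlinarith
  have hn1r : r₁^2 ≤ n₁ := normSq_ge hz1
  have hn2r : r₂^2 ≤ n₂ := normSq_ge hz2
  -- real part corrections are tiny
  have e1 : |7 * ((zf z₁).im / n₁)| ≤ 0.0001 := by
    rw [abs_mul, abs_div]
    have hd : |n₁| = n₁ := _root_.abs_of_nonneg (by linarith)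
    rw [hd]
    have : |(zf z₁).im| / n₁ ≤ 1.6 / 998001 := by
      apply div_le_div₀ (by norm_num) him1 (by norm_num) hn1b
    have h7 : |(7:ℝ)| = 7 := by norm_num
    rw [h7]
    linarith
  have e2 : |7 * ((zf z₂).im / n₂)| ≤ 0.0001 := by
    rw [abs_mul, abs_div]
    have hd : |n₂| = n₂ := _root_.abs_of_nonneg (by linarith)
    rw [hd]
    have : |(zf z₂).im| / n₂ ≤ 1.6 / 998001 := by
      apply div_le_div₀ (by norm_num) him2 (by norm_num) hn2b
    have h7 : |(7:ℝ)| = 7 := by norm_num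
    rw [h7]
    linarith
  -- the gap in log-modulus
  have hlog : Real.log a₁ + 5.9 ≤ Real.log a₂ := by
    have u1 : (tf z₁).re = Real.log a₁ + 7 * ((zf z₁).im / n₁) := tf_re_eq hz1
    have u2 : (tf z₂).re = Real.log a₂ + 7 * ((zf z₂).im / n₂) := tf_re_eq hz2
    rw [u1, u2] at hre
    rw [abs_le] at e1 e2
    linarith
  -- modulus ratio at least 64
  have hratio : 64 * a₁ ≤ a₂ := by
    have hp1 : (0:ℝ) < a₁ := by linarith
    have hp2 : (0:ℝ) < a₂ := by linarith
    have h64 : (64:ℝ) < Real.exp 5.9 := by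
      have hl : Real.log 64 < 5.9 := by
        have : (64:ℝ) = 2^6 := by norm_num
        rw [this, Real.log_pow]
        have := Real.log_two_lt_d9
        push_cast
        nlinarith
      exact (Real.log_lt_iff_lt_exp (by norm_num)).mp hl
    have : a₂ = Real.exp (Real.log a₂) := (Real.exp_log hp2).symm
    rw [this]
    calc 64 * a₁ ≤ Real.exp 5.9 * a₁ := by nlinarith
      _ = Real.exp (Real.log a₁ + 5.9) := by
          rw [Real.exp_add, Real.exp_log hp1]; ring
      _ ≤ Real.exp (Real.log a₂) := Real.exp_le_exp.mpr hlog
  -- hence re ζ₂ is much bigger than re ζ₁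
  have hrr : 62 * r₁ ≤ r₂ := by
    have habs2 : a₂ ≤ |r₂| + |(zf z₂).im| := Complex.abs_le_abs_re_add_abs_im (zf z₂)
    have : |r₂| = r₂ := _root_.abs_of_nonneg (by linarith)
    rw [this] at habs2
    have hra : r₁ ≤ a₁ := Complex.re_le_abs (zf z₁)
    linarith
  -- the vertical (im) equation
  have veq : Complex.arg (zf z₁) + 7 * (r₁ / n₁) = Complex.arg (zf z₂) + 7 * (r₂ / n₂) := by
    have v1 := tf_im_eq hz1
    have v2 := tf_im_eq hz2
    rw [v1, v2] at him
    exact him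
  -- bounds on each term
  have harg1 : |Complex.arg (zf z₁)| ≤ 2.6 / r₁ := by
    have := arg_le_div (show (0:ℝ) < r₁ by linarith)
    have hnum : (Real.pi/2) * |(zf z₁).im| ≤ 2.6 := by
      have hpi : Real.pi < 3.15 := Real.pi_lt_d2
      nlinarith [abs_nonneg (zf z₁).im, Real.pi_pos]
    calc |Complex.arg (zf z₁)| ≤ (Real.pi/2) * |(zf z₁).im| / r₁ := this
      _ ≤ 2.6 / r₁ := by
          apply (div_le_div_iff_of_pos_right (show (0:ℝ) < r₁ by linarith)).mpr hnum
  have harg2 : |Complex.arg (zf z₂)| ≤ 2.6 / r₂ := by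
    have := arg_le_div (show (0:ℝ) < r₂ by linarith)
    have hnum : (Real.pi/2) * |(zf z₂).im| ≤ 2.6 := by
      have hpi : Real.pi < 3.15 := Real.pi_lt_d2
      nlinarith [abs_nonneg (zf z₂).im, Real.pi_pos]
    calc |Complex.arg (zf z₂)| ≤ (Real.pi/2) * |(zf z₂).im| / r₂ := this
      _ ≤ 2.6 / r₂ := by
          apply (div_le_div_iff_of_pos_right (show (0:ℝ) < r₂ by linarith)).mpr hnum
  have hq2 : 7 * (r₂ / n₂) ≤ 7 / r₂ := by
    have hx : r₂ / n₂ ≤ 1 / r₂ := by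
      rw [div_le_div_iff₀ (by nlinarith) (by linarith)]
      nlinarith
    have hy := mul_le_mul_of_nonneg_left hx (show (0:ℝ) ≤ 7 by norm_num)
    calc 7 * (r₂ / n₂) ≤ 7 * (1 / r₂) := hy
      _ = 7 / r₂ := by ring
  have hq1 : 6.99 / r₁ ≤ 7 * (r₁ / n₁) := by
    have hnle : n₁ ≤ r₁^2 + 2.56 := normSq_le hz1
    have : 6.99 / r₁ ≤ 7 * r₁ / (r₁^2 + 2.56) := by
      rw [div_le_div_iff₀ (by linarith) (by nlinarith)]
      nlinarith
    have h2 : 7 * r₁ / (r₁^2 + 2.56) ≤ 7 * r₁ / n₁ := by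
      apply div_le_div_of_nonneg_left (by linarith) (by nlinarith) hnle
    calc (6.99:ℝ) / r₁ ≤ 7 * r₁ / (r₁^2 + 2.56) := this
      _ ≤ 7 * r₁ / n₁ := h2
      _ = 7 * (r₁ / n₁) := by ring
  -- combine: contradiction
  have c1 : 2.6 / r₂ ≤ 2.6 / (62 * r₁) :=
    div_le_div_of_nonneg_left (by norm_num) (by nlinarith) hrr
  have c2 : 7 / r₂ ≤ 7 / (62 * r₁) :=
    div_le_div_of_nonneg_left (by norm_num) (by nlinarith) hrr
  have d1 : 2.6 / (62 * r₁) = (2.6/62) / r₁ := by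
    rw [div_div]
  have d2 : 7 / (62 * r₁) = (7/62) / r₁ := by
    rw [div_div]
  rw [abs_le] at harg1 harg2
  have hsplit : ((2.6/62) + 2.6 + (7/62) - 6.99) / r₁
      = (2.6/62)/r₁ + 2.6/r₁ + (7/62)/r₁ - 6.99/r₁ := by
    rw [sub_div, add_div, add_div]
  have t1 : (zf z₂).arg ≤ (2.6/62) / r₁ := by
    rw [← d1]; linarith [harg2.2]
  have t2 : -((2.6) / r₁) ≤ (zf z₁).arg := harg1.1
  have t3 : 7 * (r₂ / n₂) ≤ (7/62) / r₁ := by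
    rw [← d2]; linarith
  have final : (0:ℝ) ≤ ((2.6/62) + 2.6 + (7/62) - 6.99) / r₁ := by
    rw [hsplit]
    linarith
  have hneg : ((2.6/62) + 2.6 + (7/62) - 6.99) / r₁ < 0 := by
    apply div_neg_of_neg_of_pos (by norm_num) (by linarith)
  linarith

lemma exp_gap {a b : ℝ} (ha : |a| ≤ 1.61) (hb : |b| ≤ 1.61) :
    (1/9) * |a - b| ≤ |Real.exp (-a) - Real.exp (-b)| := by
  have he9 : (1:ℝ)/9 ≤ Real.exp (-1.61) := by
    have h3 : Real.exp 2 = Real.exp 1 * Real.exp 1 := by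
      rw [← Real.exp_add]; norm_num
    have h4 : Real.exp 2 < 9 := by
      have := Real.exp_one_lt_d9
      nlinarith [Real.exp_pos 1]
    have h5 : Real.exp (-1.61) = 1 / Real.exp 1.61 := by
      rw [Real.exp_neg]; ring
    have h6 : Real.exp 1.61 ≤ Real.exp 2 := Real.exp_le_exp.mpr (by norm_num)
    rw [h5]
    rw [div_le_div_iff₀ (by norm_num) (Real.exp_pos _)]
    nlinarith [Real.exp_pos 1.61]
  rw [abs_le] at ha hb
  have key : ∀ u v : ℝ, -1.61 ≤ u → u ≤ v → v ≤ 1.61 →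
      (1/9) * (v - u) ≤ Real.exp (-u) - Real.exp (-v) := by
    intro u v hu huv hv
    have h1 : Real.exp (-u) - Real.exp (-v) = Real.exp (-v) * (Real.exp (v - u) - 1) := by
      rw [mul_sub, ← Real.exp_add, mul_one]
      ring_nf
    have h2 : v - u ≤ Real.exp (v - u) - 1 := by
      have := Real.add_one_le_exp (v - u)
      linarith
    have h3 : Real.exp (-1.61) ≤ Real.exp (-v) := Real.exp_le_exp.mpr (by linarith)
    rw [h1]
    have h4 : (0:ℝ) ≤ v - u := by linarith
    nlinarith [Real.exp_pos (-v)]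
  rcases le_total a b with h | h
  · have := key a b (by linarith) h (by linarith)
    have hd : |a - b| = b - a := by rw [abs_sub_comm, _root_.abs_of_nonneg (by linarith)]
    have he : Real.exp (-a) - Real.exp (-b) ≥ 0 := by
      have := Real.exp_le_exp.mpr (show -b ≤ -a by linarith); linarith
    rw [hd, _root_.abs_of_nonneg he]
    linarith
  · have := key b a (by linarith) h (by linarith)
    have hd : |a - b| = a - b := _root_.abs_of_nonneg (by linarith)
    have he : Real.exp (-b) - Real.exp (-a) ≥ 0 := by
      have := Real.exp_le_exp.mpr (show -a ≤ -b by linarith); linarith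
    rw [hd, abs_sub_comm, _root_.abs_of_nonneg he]
    linarith

lemma f_eq (k : ℝ) (w : ℂ) : hf k w + (starRingEnd ℂ) (gf k w)
    = Complex.exp (Complex.I * tf w)
      + ((k/1000 : ℝ) : ℂ) * (((2 * (tf w).im : ℝ) : ℂ) * Complex.I) := by
  have h1 : (starRingEnd ℂ) (gf k w)
      = -((k/1000 : ℝ) : ℂ) * (starRingEnd ℂ) (tf w) := by
    rw [gf]
    rw [map_mul, map_neg, Complex.conj_ofReal]
  rw [hf, h1]
  have h2 : tf w - (starRingEnd ℂ) (tf w) = ((2 * (tf w).im : ℝ) : ℂ) * Complex.I :=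
    Complex.sub_conj (tf w)
  linear_combination ((k/1000 : ℝ) : ℂ) * h2

lemma inj_aux (k : ℝ) (hk0 : 0 < k) (hk1 : k < 1)
    (hz1 : Complex.abs z₁ < 1) (hz2 : Complex.abs z₂ < 1)
    (heq : hf k z₁ + (starRingEnd ℂ) (gf k z₁) = hf k z₂ + (starRingEnd ℂ) (gf k z₂)) :
    z₁ = z₂ := by
  rw [f_eq k z₁, f_eq k z₂] at heq
  set d₁ : ℝ := (tf z₁).im with hd₁
  set d₂ : ℝ := (tf z₂).im with hd₂
  have hA : Complex.exp (Complex.I * tf z₁) - Complex.exp (Complex.I * tf z₂)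
      = ((k/1000 : ℝ) : ℂ) * (((2 * (d₂ - d₁) : ℝ) : ℂ) * Complex.I) := by
    push_cast
    push_cast at heq
    linear_combination heq
  have habs1 : Complex.abs (Complex.exp (Complex.I * tf z₁)) = Real.exp (-d₁) := by
    rw [Complex.abs_exp]; congr 1; simp [Complex.mul_re]; rfl
  have habs2 : Complex.abs (Complex.exp (Complex.I * tf z₂)) = Real.exp (-d₂) := by
    rw [Complex.abs_exp]; congr 1; simp [Complex.mul_re]; rfl
  have hrhs : Complex.abs (((k/1000 : ℝ) : ℂ) * (((2 * (d₂ - d₁) : ℝ) : ℂ) * Complex.I))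
      = (k/1000) * (2 * |d₂ - d₁|) := by
    rw [map_mul, map_mul, Complex.abs_I, mul_one, Complex.abs_ofReal, Complex.abs_ofReal]
    rw [_root_.abs_of_nonneg (by positivity : (0:ℝ) ≤ k/1000)]
    rw [abs_mul]
    norm_num
  have hgap := exp_gap (tf_im_bound hz1) (tf_im_bound hz2)
  have hchain : (1/9) * |d₁ - d₂| ≤ (k/1000) * (2*|d₂ - d₁|) := by
    calc (1/9) * |d₁ - d₂| ≤ |Real.exp (-d₁) - Real.exp (-d₂)| := hgap
      _ ≤ Complex.abs (Complex.exp (Complex.I * tf z₁) - Complex.exp (Complex.I * tf z₂)) := by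
          rw [← habs1, ← habs2]
          exact Complex.abs.abs_abv_sub_le_abv_sub _ _
      _ = (k/1000) * (2 * |d₂ - d₁|) := by rw [hA, hrhs]
  have hd : d₁ = d₂ := by
    by_contra hne
    have hpos : 0 < |d₁ - d₂| := abs_pos.mpr (sub_ne_zero.mpr hne)
    have hcomm : |d₂ - d₁| = |d₁ - d₂| := abs_sub_comm _ _
    rw [hcomm] at hchain
    nlinarith
  have hexp : Complex.exp (Complex.I * tf z₁) = Complex.exp (Complex.I * tf z₂) := by
    have : Complex.exp (Complex.I * tf z₁) - Complex.exp (Complex.I * tf z₂) = 0 := by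
      rw [hA, hd]
      push_cast
      ring
    exact sub_eq_zero.mp this
  obtain ⟨n, hn⟩ := Complex.exp_eq_exp_iff_exists_int.mp hexp
  have htau : tf z₁ = tf z₂ + (((n : ℝ) * (2*Real.pi) : ℝ) : ℂ) := by
    apply mul_left_cancel₀ Complex.I_ne_zero
    push_cast
    push_cast at hn
    linear_combination hn
  have hre2 : (tf z₁).re = (tf z₂).re + (n:ℝ) * (2*Real.pi) := by
    rw [htau, Complex.add_re, Complex.ofReal_re]
  have hpi := Real.pi_gt_three
  rcases lt_trichotomy n 0 with hneg | hzero | hpos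
  · exfalso
    apply stepC hz1 hz2 (by rw [← hd₁, ← hd₂, hd]) ?_
    have hn1 : (n:ℝ) ≤ -1 := by
      have : n ≤ -1 := by omega
      exact_mod_cast this
    have hmul : (n:ℝ) * (2*Real.pi) ≤ (-1) * (2*Real.pi) :=
      mul_le_mul_of_nonneg_right hn1 (by linarith)
    linarith
  · have : tf z₁ = tf z₂ := by rw [htau, hzero]; push_cast; ring
    exact stepD hz1 hz2 this
  · exfalso
    apply stepC hz2 hz1 (by rw [← hd₁, ← hd₂, hd]) ?_
    have hn1 : (1:ℝ) ≤ (n:ℝ) := by exact_mod_cast hpos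
    have hmul : (1:ℝ) * (2*Real.pi) ≤ (n:ℝ) * (2*Real.pi) :=
      mul_le_mul_of_nonneg_right hn1 (by linarith)
    linarith

lemma unbounded (k : ℝ) (hk0 : 0 < k) (M : ℝ) :
    ∃ z : ℂ, Complex.abs z < 1 ∧ M < Complex.abs (hf k z) := by
  set T : ℝ := Real.exp ((|M| + 10) * 1000 / k) with hT
  have hT1 : 1 ≤ T := by
    rw [hT]
    calc (1:ℝ) = Real.exp 0 := Real.exp_zero.symm
      _ ≤ _ := Real.exp_le_exp.mpr (by positivity)
  set x : ℝ := 1 - Real.exp (-T) with hx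
  have hxball : Complex.abs (x:ℂ) < 1 := by
    rw [Complex.abs_ofReal]
    have h1 : 0 < Real.exp (-T) := Real.exp_pos _
    have h2 : Real.exp (-T) ≤ 1 := by
      calc Real.exp (-T) ≤ Real.exp 0 := Real.exp_le_exp.mpr (by linarith)
        _ = 1 := Real.exp_zero
    rw [_root_.abs_of_nonneg (by rw [hx]; linarith)]
    rw [hx]; linarith
  refine ⟨(x:ℂ), hxball, ?_⟩
  have hx1 : (1:ℂ) - (x:ℂ) = ((Real.exp (-T) : ℝ) : ℂ) := by
    rw [hx]; push_cast; ring
  have hlog : Complex.log (1 - (x:ℂ)) = ((-T : ℝ) : ℂ) := by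
    rw [hx1, ← Complex.ofReal_log (le_of_lt (Real.exp_pos _)), Real.log_exp]
  have hzf : zf (x:ℂ) = ((1000 + T : ℝ) : ℂ) := by
    rw [zf, hlog]; push_cast; ring
  have habs : Complex.abs (zf (x:ℂ)) = 1000 + T := by
    rw [hzf, Complex.abs_ofReal, _root_.abs_of_nonneg (by linarith)]
  have him0 : (zf (x:ℂ)).im = 0 := by rw [hzf]; simp
  have hre_tf : (tf (x:ℂ)).re = Real.log (1000 + T) := by
    rw [tf_re_eq hxball, him0, habs]
    simp
  have habs_tf : Real.log (1000 + T) ≤ Complex.abs (tf (x:ℂ)) := by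
    rw [← hre_tf]; exact Complex.re_le_abs _
  have hexp9 := (exp_bounds hxball).2
  -- |h| ≥ (k/1000)|τ| - |exp(iτ)|
  have htri : (k/1000) * Complex.abs (tf (x:ℂ)) - 9 ≤ Complex.abs (hf k (x:ℂ)) := by
    have hB : ((k/1000:ℝ):ℂ) * tf (x:ℂ)
        = hf k (x:ℂ) - Complex.exp (Complex.I * tf (x:ℂ)) := by
      rw [hf]; ring
    have h2 : Complex.abs (((k/1000:ℝ):ℂ) * tf (x:ℂ))
        ≤ Complex.abs (hf k (x:ℂ)) + Complex.abs (Complex.exp (Complex.I * tf (x:ℂ))) := by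
      rw [hB]
      exact Complex.abs.sub_le_add _ _
    have h3 : Complex.abs (((k/1000:ℝ):ℂ) * tf (x:ℂ)) = (k/1000) * Complex.abs (tf (x:ℂ)) := by
      rw [map_mul, Complex.abs_ofReal, _root_.abs_of_nonneg (by positivity)]
    rw [h3] at h2
    linarith
  have hlogT : (|M|+10) * 1000 / k ≤ Real.log (1000 + T) := by
    have h1 : Real.log T ≤ Real.log (1000 + T) :=
      Real.log_le_log (by linarith) (by linarith)
    have h2 : Real.log T = (|M|+10) * 1000 / k := by rw [hT, Real.log_exp]
    linarith
  have hmul : (k/1000) * ((|M|+10) * 1000 / k) = |M| + 10 := by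
    field_simp
  have h5 : (k/1000) * ((|M|+10) * 1000 / k) ≤ (k/1000) * Complex.abs (tf (x:ℂ)) := by
    apply mul_le_mul_of_nonneg_left ?_ (by positivity)
    linarith
  rw [hmul] at h5
  have habsM : M ≤ |M| := le_abs_self M
  linarith

end Stmt19

end Stmt19Aux

open Stmt19 in
theorem stmt19 (k : ℝ) (hk0 : 0 < k) (hk1 : k < 1) :
    ∃ h g : ℂ → ℂ,
      DifferentiableOn ℂ h (ball (0:ℂ) 1) ∧
      DifferentiableOn ℂ g (ball (0:ℂ) 1) ∧
      (∃ M : ℝ, ∀ z ∈ ball (0:ℂ) 1,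
        ‖h z + (starRingEnd ℂ) (g z)‖ ≤ M) ∧
      Set.InjOn (fun z => h z + (starRingEnd ℂ) (g z)) (ball (0:ℂ) 1) ∧
      (∀ z ∈ ball (0:ℂ) 1,
        ‖deriv g z‖ ≤ k * ‖deriv h z‖) ∧
      (∀ z ∈ ball (0:ℂ) 1, deriv h z ≠ 0) ∧
      ¬ ∃ M : ℝ, ∀ z ∈ ball (0:ℂ) 1, ‖h z‖ ≤ M := by
  have hball : ∀ z : ℂ, z ∈ ball (0:ℂ) 1 → Complex.abs z < 1 := by
    intro z hz
    have := mem_ball_zero_iff.mp hz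
    rwa [Complex.norm_eq_abs] at this
  refine ⟨hf k, gf k, ?_, ?_, ⟨10, ?_⟩, ?_, ?_, ?_, ?_⟩
  · intro z hz
    exact ((hasDerivAt_hf k (hball z hz)).differentiableAt).differentiableWithinAt
  · intro z hz
    exact ((hasDerivAt_gf k (hball z hz)).differentiableAt).differentiableWithinAt
  · intro z hz
    have habs := hball z hz
    rw [f_eq k z]
    have h1 := (exp_bounds habs).2
    have h2 := tf_im_bound habs
    have h3 : Complex.abs (((k/1000 : ℝ) : ℂ) * (((2 * (tf z).im : ℝ) : ℂ) * Complex.I))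
        = (k/1000) * (2 * |(tf z).im|) := by
      rw [map_mul, map_mul, Complex.abs_I, mul_one, Complex.abs_ofReal, Complex.abs_ofReal]
      rw [_root_.abs_of_nonneg (by positivity : (0:ℝ) ≤ k/1000), abs_mul]
      norm_num
    calc Complex.abs (Complex.exp (Complex.I * tf z)
          + ((k/1000 : ℝ) : ℂ) * (((2 * (tf z).im : ℝ) : ℂ) * Complex.I))
        ≤ Complex.abs (Complex.exp (Complex.I * tf z))
          + Complex.abs (((k/1000 : ℝ) : ℂ) * (((2 * (tf z).im : ℝ) : ℂ) * Complex.I)) :=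
          Complex.abs.add_le _ _
      _ ≤ 9 + (k/1000) * (2 * |(tf z).im|) := by rw [h3]; linarith
      _ ≤ 10 := by nlinarith [abs_nonneg (tf z).im]
  · intro z₁ h1 z₂ h2 heq
    exact inj_aux k hk0 hk1 (hball z₁ h1) (hball z₂ h2) heq
  · intro z hz
    have habs := hball z hz
    rw [deriv_gf k habs, deriv_hf k habs]
    rw [Complex.norm_eq_abs, Complex.norm_eq_abs, map_mul, map_mul]
    have hgabs : Complex.abs (-((k/1000 : ℝ) : ℂ)) = k/1000 := by
      rw [Complex.abs.map_neg, Complex.abs_ofReal,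
        _root_.abs_of_nonneg (by positivity : (0:ℝ) ≤ k/1000)]
    rw [hgabs]
    have hfac := factor_lb k hk0 hk1 habs
    have htd := Complex.abs.nonneg (td z)
    have hhint := mul_le_mul_of_nonneg_left hfac (mul_nonneg hk0.le htd)
    nlinarith [hhint, mul_nonneg hk0.le htd]
  · intro z hz
    have habs := hball z hz
    rw [deriv_hf k habs]
    apply mul_ne_zero (td_ne habs)
    intro hcontra
    have := factor_lb k hk0 hk1 habs
    rw [hcontra] at this
    simp at this
    linarith
  · rintro ⟨M, hM⟩
    obtain ⟨z, hz, hlt⟩ := unbounded k hk0 M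
    have hmem : z ∈ ball (0:ℂ) 1 := by
      rw [mem_ball_zero_iff, Complex.norm_eq_abs]
      exact hz
    exact absurd (hM z hmem) (not_le.mpr hlt)
end
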